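/- If {Λ_i}_{i∈I} is a *-g-Parseval frame for a Hilbert A-module H (bounds A₀ = B₀ = 1) and {Γ_j}_{j∈J} is a *-g-Parseval frame for a Hilbert B-module K, then {Λ_i ⊗ Γ_j}_{(i,j)∈I×J} is a *-g-Parseval frame for H ⊗ K: Σ_{i,j} ⟨(Λ_i ⊗ Γ_j)z, (Λ_i ⊗ Γ_j)z⟩ = ⟨z,z⟩ for all z ∈ H ⊗ K. -/

import Mathlib

set_option maxHeartbeats 2000000

/-- The Hilbert C⋆-module class as it stood in Mathlib of December 2024 (a *right* `A`-module,
`⟪x, y <• a⟫ = ⟪x, y⟫ * a`); Mathlib's `CStarModule` now describes left modules. -/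
class OldCStarModule (A E : Type*) [NonUnitalSemiring A] [StarRing A] [Module ℂ A]
    [AddCommGroup E] [Module ℂ E] [PartialOrder A] [SMul Aᵐᵒᵖ E] [Norm A] [Norm E]
    extends Inner A E where
  inner_add_right {x} {y} {z} : inner x (y + z) = inner x y + inner x z
  inner_self_nonneg {x} : 0 ≤ inner x x
  inner_self {x} : inner x x = 0 ↔ x = 0
  inner_op_smul_right {a : A} {x y : E} : inner x (MulOpposite.op a • y) = inner x y * a
  inner_smul_right_complex {z : ℂ} {x} {y} : inner x (z • y) = z • inner x y
  star_inner x y : star (inner x y) = inner y x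
  norm_eq_sqrt_norm_inner_self x : ‖x‖ = Real.sqrt ‖inner x x‖

namespace OldCStarModule

variable {A E : Type*} [NonUnitalCStarAlgebra A] [PartialOrder A]
  [NormedAddCommGroup E] [NormedSpace ℂ E] [SMul Aᵐᵒᵖ E] [OldCStarModule A E]

lemma inner_add_left {x y z : E} :
    inner (𝕜 := A) (x + y) z = inner (𝕜 := A) x z + inner (𝕜 := A) y z := by
  rw [← star_inner z (x + y), inner_add_right, star_add, star_inner, star_inner]

lemma inner_smul_left_complex {c : ℂ} {x y : E} :
    inner (𝕜 := A) (c • x) y = star c • inner (𝕜 := A) x y := by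
  rw [← star_inner y (c • x), inner_smul_right_complex, star_smul, star_inner]

lemma inner_zero_right {x : E} : inner (𝕜 := A) x (0 : E) = 0 := by
  have h : inner (𝕜 := A) x (0 : E) = inner (𝕜 := A) x 0 + inner (𝕜 := A) x 0 := by
    rw [← inner_add_right, add_zero]
  simpa using h

lemma inner_zero_left {x : E} : inner (𝕜 := A) (0 : E) x = 0 := by
  rw [← star_inner x 0, inner_zero_right, star_zero]

lemma inner_neg_right {x y : E} : inner (𝕜 := A) x (-y) = -inner (𝕜 := A) x y := by
  apply eq_neg_of_add_eq_zero_left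
  rw [← inner_add_right, neg_add_cancel, inner_zero_right]

lemma inner_sub_right {x y z : E} :
    inner (𝕜 := A) x (y - z) = inner (𝕜 := A) x y - inner (𝕜 := A) x z := by
  rw [sub_eq_add_neg, inner_add_right, inner_neg_right, ← sub_eq_add_neg]

lemma inner_sub_left {x y z : E} :
    inner (𝕜 := A) (x - y) z = inner (𝕜 := A) x z - inner (𝕜 := A) y z := by
  rw [← star_inner z (x - y), inner_sub_right, star_sub, star_inner, star_inner]

lemma inner_op_smul_left {a : A} {x y : E} :
    inner (𝕜 := A) (MulOpposite.op a • x) y = star a * inner (𝕜 := A) x y := by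
  rw [← star_inner y, inner_op_smul_right, star_mul, star_inner]

lemma inner_smul_right_real {r : ℝ} {x y : E} :
    inner (𝕜 := A) x (r • y) = r • inner (𝕜 := A) x y := by
  have h₁ : r • y = (r : ℂ) • y := by simp
  rw [h₁, inner_smul_right_complex]
  simp

lemma inner_smul_left_real {r : ℝ} {x y : E} :
    inner (𝕜 := A) (r • x) y = r • inner (𝕜 := A) x y := by
  have h₁ : r • x = (r : ℂ) • x := by simp
  rw [h₁, inner_smul_left_complex]
  simp

lemma norm_sq_eq {x : E} : ‖x‖ ^ 2 = ‖inner (𝕜 := A) x x‖ := by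
  rw [norm_eq_sqrt_norm_inner_self (A := A) x, Real.sq_sqrt (norm_nonneg _)]

lemma inner_mul_inner_swap_le [StarOrderedRing A] {x y : E} :
    inner (𝕜 := A) y x * inner (𝕜 := A) x y ≤ ‖x‖ ^ 2 • inner (𝕜 := A) y y := by
  rcases eq_or_ne x 0 with h | h
  · subst h
    simp [inner_zero_left, inner_zero_right]
  · have hpos : (0 : ℝ) < ‖x‖ ^ 2 := by
      have := norm_pos_iff.2 h
      positivity
    have h1 : (0 : A) ≤ inner (𝕜 := A)
        (MulOpposite.op (inner (𝕜 := A) x y) • x - ‖x‖ ^ 2 • y)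
        (MulOpposite.op (inner (𝕜 := A) x y) • x - ‖x‖ ^ 2 • y) := inner_self_nonneg
    have h2 : inner (𝕜 := A)
        (MulOpposite.op (inner (𝕜 := A) x y) • x - ‖x‖ ^ 2 • y)
        (MulOpposite.op (inner (𝕜 := A) x y) • x - ‖x‖ ^ 2 • y)
        = inner (𝕜 := A) y x * inner (𝕜 := A) x x * inner (𝕜 := A) x y
          - ‖x‖ ^ 2 • (inner (𝕜 := A) y x * inner (𝕜 := A) x y)
          - ‖x‖ ^ 2 • (inner (𝕜 := A) y x * inner (𝕜 := A) x y)
          + ‖x‖ ^ 2 • (‖x‖ ^ 2 • inner (𝕜 := A) y y) := by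
      simp only [inner_sub_left, inner_sub_right, inner_op_smul_left, inner_op_smul_right,
        inner_smul_left_real, inner_smul_right_real, star_inner, mul_smul_comm, smul_mul_assoc,
        mul_assoc, sub_mul, mul_sub, smul_sub]
      abel
    have h3 := CStarAlgebra.star_left_conjugate_le_norm_smul (a := inner (𝕜 := A) x y)
      (b := inner (𝕜 := A) x x) (star_inner x x)
    rw [star_inner, ← norm_sq_eq] at h3
    have h4 : 0 ≤ ‖x‖ ^ 2 • (‖x‖ ^ 2 • inner (𝕜 := A) y y)
        - ‖x‖ ^ 2 • (inner (𝕜 := A) y x * inner (𝕜 := A) x y) := by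
      have h5 := add_nonneg (h2 ▸ h1) (sub_nonneg.2 h3)
      convert h5 using 1
      abel
    rwa [sub_nonneg, smul_le_smul_iff_of_pos_left hpos] at h4

lemma norm_inner_le [StarOrderedRing A] {x y : E} :
    ‖inner (𝕜 := A) x y‖ ≤ ‖x‖ * ‖y‖ := by
  have : ‖inner (𝕜 := A) x y‖ ^ 2 ≤ (‖x‖ * ‖y‖) ^ 2 := by
   calc ‖inner (𝕜 := A) x y‖ ^ 2
        = ‖inner (𝕜 := A) y x * inner (𝕜 := A) x y‖ := by
          rw [← star_inner x y, CStarRing.norm_star_mul_self, pow_two]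
    _ ≤ ‖‖x‖ ^ 2 • inner (𝕜 := A) y y‖ := by
          refine CStarAlgebra.norm_le_norm_of_nonneg_of_le ?_ inner_mul_inner_swap_le
          rw [← star_inner x y]
          exact star_mul_self_nonneg _
    _ = ‖x‖ ^ 2 * ‖inner (𝕜 := A) y y‖ := by
          rw [norm_smul, Real.norm_of_nonneg (by positivity)]
    _ = (‖x‖ * ‖y‖) ^ 2 := by rw [← norm_sq_eq]; ring
  exact (pow_le_pow_iff_left₀ (norm_nonneg _) (by positivity) two_ne_zero).mp this

/-- The sesquilinear inner product. -/
noncomputable def innerₛₗ : E →ₗ⋆[ℂ] E →ₗ[ℂ] A where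
  toFun x := { toFun := fun y => inner (𝕜 := A) x y
               map_add' := fun z y => inner_add_right
               map_smul' := fun z y => inner_smul_right_complex }
  map_add' z y := by ext w; exact inner_add_left
  map_smul' z y := by ext w; exact inner_smul_left_complex

/-- The continuous sesquilinear inner product. -/
noncomputable def innerSL [StarOrderedRing A] : E →L⋆[ℂ] E →L[ℂ] A :=
  LinearMap.mkContinuous₂ (innerₛₗ : E →ₗ⋆[ℂ] E →ₗ[ℂ] A) 1 <| fun x y => by
    rw [one_mul]
    exact norm_inner_le

lemma continuous_inner [StarOrderedRing A] :
    Continuous (fun x : E × E => inner (𝕜 := A) x.1 x.2) := by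
  show Continuous (fun x : E × E => (innerSL : E →L⋆[ℂ] E →L[ℂ] A) x.1 x.2)
  fun_prop

end OldCStarModule

lemma my_sq_le_norm_smul {A : Type*} [NonUnitalCStarAlgebra A] [PartialOrder A]
    [StarOrderedRing A] {a : A} (ha : 0 ≤ a) : a * a ≤ ‖a‖ • a := by
  set s := CFC.sqrt a with hsdef
  have hs : star s = s := (IsSelfAdjoint.of_nonneg (CFC.sqrt_nonneg a))
  have h := CStarAlgebra.star_left_conjugate_le_norm_smul (a := s) (b := a)
    (IsSelfAdjoint.of_nonneg ha)
  rw [hs] at h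
  have hmul : s * s = a := CFC.sqrt_mul_sqrt_self a ha
  calc a * a = s * a * s := by rw [← hmul]; noncomm_ring
    _ ≤ ‖a‖ • (s * s) := h
    _ = ‖a‖ • a := by rw [hmul]

lemma my_polar_aux {A C H : Type*} [NonUnitalCStarAlgebra A] [PartialOrder A]
    [StarOrderedRing A] [NormedAddCommGroup H] [NormedSpace ℂ H] [SMul Aᵐᵒᵖ H]
    [OldCStarModule A H] [AddCommGroup C] [Module ℂ C] (L : A →ₗ[ℂ] C) (u v : H) :
    L (inner (𝕜 := A) u v) = (4 : ℂ)⁻¹ • ∑ k ∈ Finset.range 4,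
      Complex.I ^ k • L (inner (𝕜 := A)
        (Complex.I ^ k • u + v) (Complex.I ^ k • u + v)) := by
  have expand : ∀ c : ℂ, (inner (𝕜 := A) (c • u + v) (c • u + v)) =
      (star c * c) • inner (𝕜 := A) u u + star c • inner (𝕜 := A) u v
        + c • inner (𝕜 := A) v u + inner (𝕜 := A) v v := by
    intro c
    simp only [OldCStarModule.inner_add_left, OldCStarModule.inner_add_right,
      OldCStarModule.inner_smul_left_complex, OldCStarModule.inner_smul_right_complex, smul_smul]
    module
  simp only [expand, Finset.sum_range_succ, Finset.sum_range_zero, map_add, map_smul]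
  match_scalars <;> simp [pow_succ, Complex.I_mul_I] <;> ring_nf

theorem tensor_product_star_g_parseval_frame
    {A B C H K E : Type*} {ι κ : Type*}
    [NonUnitalCStarAlgebra A] [PartialOrder A] [StarOrderedRing A]
    [NonUnitalCStarAlgebra B] [PartialOrder B] [StarOrderedRing B]
    [NonUnitalCStarAlgebra C] [PartialOrder C] [StarOrderedRing C]
    [NormedAddCommGroup H] [NormedSpace ℂ H] [SMul Aᵐᵒᵖ H] [OldCStarModule A H]
    [NormedAddCommGroup K] [NormedSpace ℂ K] [SMul Bᵐᵒᵖ K] [OldCStarModule B K]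
    [NormedAddCommGroup E] [NormedSpace ℂ E] [SMul Cᵐᵒᵖ E] [OldCStarModule C E]
    -- the spatial tensor product `C = A ⊗ B`
    (tmul : A →ₗ[ℂ] B →ₗ[ℂ] C)
    (tmul_mul : ∀ (a a' : A) (b b' : B), tmul a b * tmul a' b' = tmul (a * a') (b * b'))
    (tmul_star : ∀ (a : A) (b : B), star (tmul a b) = tmul (star a) (star b))
    -- the exterior tensor product `E = H ⊗ K`
    (tmulE : H →ₗ[ℂ] K →ₗ[ℂ] E)
    (tmulE_inner : ∀ (x x' : H) (y y' : K),
      inner (𝕜 := C) (tmulE x y) (tmulE x' y')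
        = tmul (inner (𝕜 := A) x x') (inner (𝕜 := B) y y'))
    (tmulE_dense : Dense (Submodule.span ℂ (Set.range fun p : H × K => tmulE p.1 p.2) : Set E))
    -- `{Λ i}` is a *-g-Parseval frame for `H`
    (Λ : ι → H →L[ℂ] H)
    (hΛsum : ∀ x : H, Summable fun i => inner (𝕜 := A) (Λ i x) (Λ i x))
    (hΛ : ∀ x : H, ∑' i, inner (𝕜 := A) (Λ i x) (Λ i x) = inner (𝕜 := A) x x)
    -- `{Γ j}` is a *-g-Parseval frame for `K`
    (Γ : κ → K →L[ℂ] K)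
    (hΓsum : ∀ y : K, Summable fun j => inner (𝕜 := B) (Γ j y) (Γ j y))
    (hΓ : ∀ y : K, ∑' j, inner (𝕜 := B) (Γ j y) (Γ j y) = inner (𝕜 := B) y y)
    -- the tensor product operators `Θ i j = Λ i ⊗ Γ j`
    (Θ : ι → κ → E →L[ℂ] E)
    (hΘ : ∀ (i : ι) (j : κ) (x : H) (y : K), Θ i j (tmulE x y) = tmulE (Λ i x) (Γ j y)) :
    ∀ z : E, ∑' p : ι × κ, inner (𝕜 := C) (Θ p.1 p.2 z) (Θ p.1 p.2 z) = inner (𝕜 := C) z z := by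
  classical
  -- positivity of `tmul` on positive elements
  have tpos : ∀ {a : A} {b : B}, 0 ≤ a → 0 ≤ b → 0 ≤ tmul a b := by
    intro a b ha hb
    have hsa : star (CFC.sqrt a) = CFC.sqrt a := (IsSelfAdjoint.of_nonneg (CFC.sqrt_nonneg _))
    have hsb : star (CFC.sqrt b) = CFC.sqrt b := (IsSelfAdjoint.of_nonneg (CFC.sqrt_nonneg _))
    have : tmul a b
        = star (tmul (CFC.sqrt a) (CFC.sqrt b)) * tmul (CFC.sqrt a) (CFC.sqrt b) := by
      rw [tmul_star, hsa, hsb, tmul_mul, CFC.sqrt_mul_sqrt_self a ha,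
        CFC.sqrt_mul_sqrt_self b hb]
    rw [this]
    exact star_mul_self_nonneg _
  -- monotonicity of `tmul` in both (positive) arguments
  have tmono : ∀ {a a' : A} {b b' : B}, 0 ≤ a → a ≤ a' → 0 ≤ b → b ≤ b' →
      tmul a b ≤ tmul a' b' := by
    intro a a' b b' ha haa hb hbb
    have h1 : 0 ≤ tmul (a' - a) b := tpos (sub_nonneg.2 haa) hb
    have h2 : 0 ≤ tmul a' (b' - b) := tpos (ha.trans haa) (sub_nonneg.2 hbb)
    have heq : tmul a' b' - tmul a b = tmul (a' - a) b + tmul a' (b' - b) := by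
      simp only [map_sub, LinearMap.sub_apply]
      abel
    have := add_nonneg h1 h2
    rw [← heq] at this
    exact sub_nonneg.1 this
  -- norm estimate for `tmul` on positive elements
  have tnorm : ∀ {a a' : A} {b b' : B}, 0 ≤ a → a ≤ a' → 0 ≤ b → b ≤ b' →
      ‖tmul a b‖ ^ 2 ≤ ‖a‖ * ‖b‖ * ‖tmul a' b'‖ := by
    intro a a' b b' ha haa hb hbb
    have hc : 0 ≤ tmul a b := tpos ha hb
    have hsc : star (tmul a b) = tmul a b := (IsSelfAdjoint.of_nonneg hc)
    have h1 : ‖tmul a b‖ ^ 2 = ‖tmul (a * a) (b * b)‖ := by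
      rw [sq, ← CStarRing.norm_star_mul_self, hsc, tmul_mul]
    have haa2 : 0 ≤ a * a := by
      simpa [(IsSelfAdjoint.of_nonneg ha).star_eq] using star_mul_self_nonneg a
    have hbb2 : 0 ≤ b * b := by
      simpa [(IsSelfAdjoint.of_nonneg hb).star_eq] using star_mul_self_nonneg b
    have k1 : a * a ≤ ‖a‖ • a' :=
      (my_sq_le_norm_smul ha).trans (smul_le_smul_of_nonneg_left haa (norm_nonneg a))
    have k2 : b * b ≤ ‖b‖ • b' :=
      (my_sq_le_norm_smul hb).trans (smul_le_smul_of_nonneg_left hbb (norm_nonneg b))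
    have h3 : tmul (a * a) (b * b) ≤ (‖a‖ * ‖b‖) • tmul a' b' := by
      calc tmul (a * a) (b * b) ≤ tmul (‖a‖ • a') (‖b‖ • b') := tmono haa2 k1 hbb2 k2
        _ = (‖a‖ * ‖b‖) • tmul a' b' := by
            simp only [LinearMap.map_smul_of_tower, LinearMap.smul_apply, smul_smul]
    calc ‖tmul a b‖ ^ 2 = ‖tmul (a * a) (b * b)‖ := h1
      _ ≤ ‖(‖a‖ * ‖b‖) • tmul a' b'‖ :=
          CStarAlgebra.norm_le_norm_of_nonneg_of_le (tpos haa2 hbb2) h3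
      _ = ‖a‖ * ‖b‖ * ‖tmul a' b'‖ := by
          rw [norm_smul, Real.norm_of_nonneg (by positivity)]
  -- Step 1 : diagonal simple tensors
  have key1 : ∀ (x : H) (y : K), HasSum (fun p : ι × κ =>
      tmul (inner (𝕜 := A) (Λ p.1 x) (Λ p.1 x)) (inner (𝕜 := B) (Γ p.2 y) (Γ p.2 y)))
      (tmul (inner (𝕜 := A) x x) (inner (𝕜 := B) y y)) := by
    intro x y
    set f : ι × κ → C := fun p =>
      tmul (inner (𝕜 := A) (Λ p.1 x) (Λ p.1 x)) (inner (𝕜 := B) (Γ p.2 y) (Γ p.2 y)) with hf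
    set T : C := tmul (inner (𝕜 := A) x x) (inner (𝕜 := B) y y) with hT
    have hA : HasSum (fun i => inner (𝕜 := A) (Λ i x) (Λ i x)) (inner (𝕜 := A) x x) := by
      have := (hΛsum x).hasSum; rwa [hΛ x] at this
    have hB : HasSum (fun j => inner (𝕜 := B) (Γ j y) (Γ j y)) (inner (𝕜 := B) y y) := by
      have := (hΓsum y).hasSum; rwa [hΓ y] at this
    have hApos : ∀ i, 0 ≤ inner (𝕜 := A) (Λ i x) (Λ i x) :=
      fun _ => OldCStarModule.inner_self_nonneg
    have hBpos : ∀ j, 0 ≤ inner (𝕜 := B) (Γ j y) (Γ j y) :=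
      fun _ => OldCStarModule.inner_self_nonneg
    have hA0 : (0 : A) ≤ inner (𝕜 := A) x x := OldCStarModule.inner_self_nonneg
    have hB0 : (0 : B) ≤ inner (𝕜 := B) y y := OldCStarModule.inner_self_nonneg
    have sumApos : ∀ F : Finset ι, 0 ≤ ∑ i ∈ F, inner (𝕜 := A) (Λ i x) (Λ i x) :=
      fun F => Finset.sum_nonneg fun i _ => hApos i
    have sumBpos : ∀ G : Finset κ, 0 ≤ ∑ j ∈ G, inner (𝕜 := B) (Γ j y) (Γ j y) :=
      fun G => Finset.sum_nonneg fun j _ => hBpos j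
    have sumAle : ∀ F : Finset ι,
        ∑ i ∈ F, inner (𝕜 := A) (Λ i x) (Λ i x) ≤ inner (𝕜 := A) x x :=
      fun F => sum_le_hasSum F (fun i _ => hApos i) hA
    have sumBle : ∀ G : Finset κ,
        ∑ j ∈ G, inner (𝕜 := B) (Γ j y) (Γ j y) ≤ inner (𝕜 := B) y y :=
      fun G => sum_le_hasSum G (fun j _ => hBpos j) hB
    have fpos : ∀ p : ι × κ, 0 ≤ f p := fun p => tpos (hApos p.1) (hBpos p.2)
    have rect : ∀ (F : Finset ι) (G : Finset κ), ∑ p ∈ F ×ˢ G, f p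
        = tmul (∑ i ∈ F, inner (𝕜 := A) (Λ i x) (Λ i x))
            (∑ j ∈ G, inner (𝕜 := B) (Γ j y) (Γ j y)) := by
      intro F G
      rw [Finset.sum_product]
      simp only [f, map_sum, LinearMap.coe_sum, Finset.sum_apply]
      exact Finset.sum_comm
    have rect_le : ∀ (F : Finset ι) (G : Finset κ), ∑ p ∈ F ×ˢ G, f p ≤ T := by
      intro F G
      rw [rect]
      exact tmono (sumApos F) (sumAle F) (sumBpos G) (sumBle G)
    have P_le : ∀ P : Finset (ι × κ), ∑ p ∈ P, f p ≤ T := by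
      intro P
      have hsub : P ⊆ (P.image Prod.fst) ×ˢ (P.image Prod.snd) := fun p hp =>
        Finset.mem_product.mpr ⟨Finset.mem_image_of_mem _ hp, Finset.mem_image_of_mem _ hp⟩
      exact le_trans
        (Finset.sum_le_sum_of_subset_of_nonneg hsub fun p _ _ => fpos p) (rect_le _ _)
    refine Metric.tendsto_atTop.mpr fun ε hε => ?_
    set M : ℝ := max 1 (‖T‖ * (‖inner (𝕜 := A) x x‖ + ‖inner (𝕜 := B) y y‖)) with hM
    have hM1 : (1 : ℝ) ≤ M := le_max_left _ _
    have hMpos : (0 : ℝ) < M := lt_of_lt_of_le one_pos hM1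
    set δ : ℝ := (ε / 2) ^ 2 / (2 * M) with hδdef
    have hδpos : 0 < δ := by positivity
    obtain ⟨F₀, hF₀⟩ := Metric.tendsto_atTop.mp hA δ hδpos
    obtain ⟨G₀, hG₀⟩ := Metric.tendsto_atTop.mp hB δ hδpos
    have hdA : ‖inner (𝕜 := A) x x - ∑ i ∈ F₀, inner (𝕜 := A) (Λ i x) (Λ i x)‖ < δ := by
      have := hF₀ F₀ le_rfl
      rwa [dist_eq_norm, norm_sub_rev] at this
    have hdB : ‖inner (𝕜 := B) y y - ∑ j ∈ G₀, inner (𝕜 := B) (Γ j y) (Γ j y)‖ < δ := by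
      have := hG₀ G₀ le_rfl
      rwa [dist_eq_norm, norm_sub_rev] at this
    -- bound the error at the base rectangle
    set sA : A := ∑ i ∈ F₀, inner (𝕜 := A) (Λ i x) (Λ i x) with hsA
    set sB : B := ∑ j ∈ G₀, inner (𝕜 := B) (Γ j y) (Γ j y) with hsB
    have hsplit : T - ∑ p ∈ F₀ ×ˢ G₀, f p
        = tmul (inner (𝕜 := A) x x - sA) (inner (𝕜 := B) y y)
          + tmul sA (inner (𝕜 := B) y y - sB) := by
      rw [rect]
      simp only [map_sub, LinearMap.sub_apply]
      abel
    have t1 : ‖tmul (inner (𝕜 := A) x x - sA) (inner (𝕜 := B) y y)‖ < ε / 2 := by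
      have h := tnorm (sub_nonneg.2 (sumAle F₀))
        (sub_le_self _ (sumApos F₀)) hB0 (le_refl (inner (𝕜 := B) y y))
      refine lt_of_pow_lt_pow_left₀ 2 (by positivity) ?_
      have h1 : ‖inner (𝕜 := B) y y‖ * ‖T‖ ≤ M := by
        have h2 : ‖T‖ * ‖inner (𝕜 := B) y y‖ ≤
            ‖T‖ * (‖inner (𝕜 := A) x x‖ + ‖inner (𝕜 := B) y y‖) := by
          have := norm_nonneg (inner (𝕜 := A) x x)
          nlinarith [norm_nonneg T]
        nlinarith [le_max_right 1 (‖T‖ * (‖inner (𝕜 := A) x x‖ + ‖inner (𝕜 := B) y y‖))]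
      have hbd : ‖inner (𝕜 := A) x x - sA‖ * ‖inner (𝕜 := B) y y‖ * ‖T‖ < (ε / 2) ^ 2 := by
        calc ‖inner (𝕜 := A) x x - sA‖ * ‖inner (𝕜 := B) y y‖ * ‖T‖
            = ‖inner (𝕜 := A) x x - sA‖ * (‖inner (𝕜 := B) y y‖ * ‖T‖) := by ring
          _ ≤ ‖inner (𝕜 := A) x x - sA‖ * M :=
              mul_le_mul_of_nonneg_left h1 (norm_nonneg _)
          _ < δ * M := mul_lt_mul_of_pos_right hdA hMpos
          _ = (ε / 2) ^ 2 / 2 := by rw [hδdef]; field_simp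
          _ < (ε / 2) ^ 2 := by
              have : (0 : ℝ) < (ε / 2) ^ 2 := by positivity
              linarith
      exact lt_of_le_of_lt h hbd
    have t2 : ‖tmul sA (inner (𝕜 := B) y y - sB)‖ < ε / 2 := by
      have h := tnorm (sumApos F₀) (sumAle F₀) (sub_nonneg.2 (sumBle G₀))
        (sub_le_self _ (sumBpos G₀))
      refine lt_of_pow_lt_pow_left₀ 2 (by positivity) ?_
      have hnsA : ‖sA‖ ≤ ‖inner (𝕜 := A) x x‖ :=
        CStarAlgebra.norm_le_norm_of_nonneg_of_le (sumApos F₀) (sumAle F₀)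
      have h1 : ‖inner (𝕜 := A) x x‖ * ‖T‖ ≤ M := by
        have h2 : ‖T‖ * ‖inner (𝕜 := A) x x‖ ≤
            ‖T‖ * (‖inner (𝕜 := A) x x‖ + ‖inner (𝕜 := B) y y‖) := by
          have := norm_nonneg (inner (𝕜 := B) y y)
          nlinarith [norm_nonneg T]
        nlinarith [le_max_right 1 (‖T‖ * (‖inner (𝕜 := A) x x‖ + ‖inner (𝕜 := B) y y‖))]
      have hbd : ‖sA‖ * ‖inner (𝕜 := B) y y - sB‖ * ‖T‖ < (ε / 2) ^ 2 := by
        calc ‖sA‖ * ‖inner (𝕜 := B) y y - sB‖ * ‖T‖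
            = ‖inner (𝕜 := B) y y - sB‖ * (‖sA‖ * ‖T‖) := by ring
          _ ≤ ‖inner (𝕜 := B) y y - sB‖ * (‖inner (𝕜 := A) x x‖ * ‖T‖) :=
              mul_le_mul_of_nonneg_left
                (mul_le_mul_of_nonneg_right hnsA (norm_nonneg T)) (norm_nonneg _)
          _ ≤ ‖inner (𝕜 := B) y y - sB‖ * M :=
              mul_le_mul_of_nonneg_left h1 (norm_nonneg _)
          _ < δ * M := mul_lt_mul_of_pos_right hdB hMpos
          _ = (ε / 2) ^ 2 / 2 := by rw [hδdef]; field_simp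
          _ < (ε / 2) ^ 2 := by
              have : (0 : ℝ) < (ε / 2) ^ 2 := by positivity
              linarith
      exact lt_of_le_of_lt h hbd
    have hbase : ‖T - ∑ p ∈ F₀ ×ˢ G₀, f p‖ < ε := by
      rw [hsplit]
      calc ‖_ + _‖ ≤ _ := norm_add_le _ _
        _ < ε := by linarith
    refine ⟨F₀ ×ˢ G₀, fun P hP => ?_⟩
    have h5 : ∑ p ∈ F₀ ×ˢ G₀, f p ≤ ∑ p ∈ P, f p :=
      Finset.sum_le_sum_of_subset_of_nonneg hP fun p _ _ => fpos p
    have h6 : 0 ≤ T - ∑ p ∈ P, f p := sub_nonneg.2 (P_le P)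
    have h8 : ‖T - ∑ p ∈ P, f p‖ ≤ ‖T - ∑ p ∈ F₀ ×ˢ G₀, f p‖ :=
      CStarAlgebra.norm_le_norm_of_nonneg_of_le h6 (sub_le_sub_left h5 T)
    rw [dist_eq_norm, norm_sub_rev]
    exact lt_of_le_of_lt h8 hbase
  -- Step 2a : polarization in the first factor
  have keyA : ∀ (x x' : H) (y : K), HasSum (fun p : ι × κ =>
      tmul (inner (𝕜 := A) (Λ p.1 x) (Λ p.1 x')) (inner (𝕜 := B) (Γ p.2 y) (Γ p.2 y)))
      (tmul (inner (𝕜 := A) x x') (inner (𝕜 := B) y y)) := by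
    intro x x' y
    have hk : ∀ k ∈ Finset.range 4, HasSum (fun p : ι × κ =>
        Complex.I ^ k • tmul (inner (𝕜 := A) (Λ p.1 (Complex.I ^ k • x + x'))
          (Λ p.1 (Complex.I ^ k • x + x'))) (inner (𝕜 := B) (Γ p.2 y) (Γ p.2 y)))
        (Complex.I ^ k • tmul (inner (𝕜 := A) (Complex.I ^ k • x + x')
          (Complex.I ^ k • x + x')) (inner (𝕜 := B) y y)) :=
      fun k _ => (key1 _ y).const_smul _
    have h := (hasSum_sum hk).const_smul ((4 : ℂ)⁻¹)
    have hfun : ∀ p : ι × κ,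
        tmul (inner (𝕜 := A) (Λ p.1 x) (Λ p.1 x')) (inner (𝕜 := B) (Γ p.2 y) (Γ p.2 y))
        = (4 : ℂ)⁻¹ • ∑ k ∈ Finset.range 4, Complex.I ^ k •
            tmul (inner (𝕜 := A) (Λ p.1 (Complex.I ^ k • x + x'))
              (Λ p.1 (Complex.I ^ k • x + x'))) (inner (𝕜 := B) (Γ p.2 y) (Γ p.2 y)) := by
      intro p
      have := my_polar_aux
        (L := (tmul.flip (inner (𝕜 := B) (Γ p.2 y) (Γ p.2 y)))) (Λ p.1 x) (Λ p.1 x')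
      simpa only [LinearMap.flip_apply, map_add, map_smul] using this
    have htgt : tmul (inner (𝕜 := A) x x') (inner (𝕜 := B) y y)
        = (4 : ℂ)⁻¹ • ∑ k ∈ Finset.range 4, Complex.I ^ k •
            tmul (inner (𝕜 := A) (Complex.I ^ k • x + x') (Complex.I ^ k • x + x'))
              (inner (𝕜 := B) y y) := by
      have := my_polar_aux (L := (tmul.flip (inner (𝕜 := B) y y))) x x'
      simpa only [LinearMap.flip_apply] using this
    rw [show (fun p : ι × κ =>
        tmul (inner (𝕜 := A) (Λ p.1 x) (Λ p.1 x')) (inner (𝕜 := B) (Γ p.2 y) (Γ p.2 y)))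
        = _ from funext hfun, htgt]
    exact h
  -- Step 2b : polarization in the second factor
  have key2 : ∀ (x x' : H) (y y' : K), HasSum (fun p : ι × κ =>
      tmul (inner (𝕜 := A) (Λ p.1 x) (Λ p.1 x')) (inner (𝕜 := B) (Γ p.2 y) (Γ p.2 y')))
      (tmul (inner (𝕜 := A) x x') (inner (𝕜 := B) y y')) := by
    intro x x' y y'
    have hk : ∀ k ∈ Finset.range 4, HasSum (fun p : ι × κ =>
        Complex.I ^ k • tmul (inner (𝕜 := A) (Λ p.1 x) (Λ p.1 x'))
          (inner (𝕜 := B) (Γ p.2 (Complex.I ^ k • y + y'))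
            (Γ p.2 (Complex.I ^ k • y + y'))))
        (Complex.I ^ k • tmul (inner (𝕜 := A) x x')
          (inner (𝕜 := B) (Complex.I ^ k • y + y') (Complex.I ^ k • y + y'))) :=
      fun k _ => (keyA x x' _).const_smul _
    have h := (hasSum_sum hk).const_smul ((4 : ℂ)⁻¹)
    have hfun : ∀ p : ι × κ,
        tmul (inner (𝕜 := A) (Λ p.1 x) (Λ p.1 x')) (inner (𝕜 := B) (Γ p.2 y) (Γ p.2 y'))
        = (4 : ℂ)⁻¹ • ∑ k ∈ Finset.range 4, Complex.I ^ k •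
            tmul (inner (𝕜 := A) (Λ p.1 x) (Λ p.1 x'))
              (inner (𝕜 := B) (Γ p.2 (Complex.I ^ k • y + y'))
                (Γ p.2 (Complex.I ^ k • y + y'))) := by
      intro p
      have := my_polar_aux
        (L := (tmul (inner (𝕜 := A) (Λ p.1 x) (Λ p.1 x')))) (Γ p.2 y) (Γ p.2 y')
      simpa only [map_add, map_smul] using this
    have htgt : tmul (inner (𝕜 := A) x x') (inner (𝕜 := B) y y')
        = (4 : ℂ)⁻¹ • ∑ k ∈ Finset.range 4, Complex.I ^ k •
            tmul (inner (𝕜 := A) x x')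
              (inner (𝕜 := B) (Complex.I ^ k • y + y') (Complex.I ^ k • y + y')) :=
      my_polar_aux (L := (tmul (inner (𝕜 := A) x x'))) y y'
    rw [show (fun p : ι × κ =>
        tmul (inner (𝕜 := A) (Λ p.1 x) (Λ p.1 x')) (inner (𝕜 := B) (Γ p.2 y) (Γ p.2 y')))
        = _ from funext hfun, htgt]
    exact h
  -- Step 3 : elements of the span
  have key3 : ∀ z ∈ Submodule.span ℂ (Set.range fun p : H × K => tmulE p.1 p.2),
      ∀ w ∈ Submodule.span ℂ (Set.range fun p : H × K => tmulE p.1 p.2),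
      HasSum (fun p : ι × κ => inner (𝕜 := C) (Θ p.1 p.2 z) (Θ p.1 p.2 w))
        (inner (𝕜 := C) z w) := by
    intro z hz w hw
    induction hz, hw using Submodule.span_induction₂ with
    | mem_mem z w hz hw =>
      obtain ⟨⟨x, y⟩, rfl⟩ := hz
      obtain ⟨⟨x', y'⟩, rfl⟩ := hw
      simpa only [hΘ, tmulE_inner] using key2 x x' y y'
    | zero_left w hw => simp only [map_zero, OldCStarModule.inner_zero_left]; exact hasSum_zero
    | zero_right z hz => simp only [map_zero, OldCStarModule.inner_zero_right]; exact hasSum_zero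
    | add_left u v w hu hv hw h1 h2 =>
      simpa only [map_add, OldCStarModule.inner_add_left] using h1.add h2
    | add_right u v w hu hv hw h1 h2 =>
      simpa only [map_add, OldCStarModule.inner_add_right] using h1.add h2
    | smul_left r u w hu hw h =>
      simpa only [map_smul, OldCStarModule.inner_smul_left_complex] using h.const_smul (star r)
    | smul_right r u w hu hw h =>
      simpa only [map_smul, OldCStarModule.inner_smul_right_complex] using h.const_smul r
  -- Step 4 : the partial sums are dominated by `⟪z, z⟫` for every `z`
  have posP : ∀ (P : Finset (ι × κ)) (z : E),
      ∑ p ∈ P, inner (𝕜 := C) (Θ p.1 p.2 z) (Θ p.1 p.2 z) ≤ inner (𝕜 := C) z z := by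
    intro P z
    set g : E → C := fun w => inner (𝕜 := C) w w
      - ∑ p ∈ P, inner (𝕜 := C) (Θ p.1 p.2 w) (Θ p.1 p.2 w) with hg
    have hcont : Continuous g := by
      apply Continuous.sub
      · exact OldCStarModule.continuous_inner.comp (continuous_id.prodMk continuous_id)
      · exact continuous_finset_sum _ fun p _ =>
          OldCStarModule.continuous_inner.comp
            (((Θ p.1 p.2).continuous).prodMk ((Θ p.1 p.2).continuous))
    have hspan : ∀ w ∈ Submodule.span ℂ (Set.range fun p : H × K => tmulE p.1 p.2),
        0 ≤ g w := fun w hw => sub_nonneg.2 <|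
      sum_le_hasSum P (fun p _ => OldCStarModule.inner_self_nonneg) (key3 w hw w hw)
    have hz : z ∈ closure
        (Submodule.span ℂ (Set.range fun p : H × K => tmulE p.1 p.2) : Set E) :=
      tmulE_dense z
    rw [mem_closure_iff_seq_limit] at hz
    obtain ⟨u, hu_mem, hu_lim⟩ := hz
    have hten : Filter.Tendsto (fun n => g (u n)) Filter.atTop (nhds (g z)) :=
      (hcont.continuousAt).tendsto.comp hu_lim
    have h0 : 0 ≤ g z := ge_of_tendsto' hten fun n => hspan _ (hu_mem n)
    exact sub_nonneg.1 h0
  -- Step 5 : conclusion for arbitrary `z`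
  have hmain : ∀ z : E, HasSum (fun p : ι × κ =>
      inner (𝕜 := C) (Θ p.1 p.2 z) (Θ p.1 p.2 z)) (inner (𝕜 := C) z z) := by
    intro z
    refine Metric.tendsto_atTop.mpr fun ε hε => ?_
    set δ : ℝ := Real.sqrt (ε / 8) with hδdef
    have hδpos : 0 < δ := Real.sqrt_pos.2 (by positivity)
    obtain ⟨z₀, hz₀mem, hz₀close⟩ := Metric.mem_closure_iff.mp (tmulE_dense z) δ hδpos
    obtain ⟨P₀, hP₀⟩ := Metric.tendsto_atTop.mp (key3 z₀ hz₀mem z₀ hz₀mem) (ε / 8)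
      (by positivity)
    refine ⟨P₀, fun P hPge => ?_⟩
    set w : E := z - z₀ with hwdef
    set D : E → C := fun v => inner (𝕜 := C) v v
      - ∑ p ∈ P, inner (𝕜 := C) (Θ p.1 p.2 v) (Θ p.1 p.2 v) with hD
    set Cr : E → E → C := fun v v' => inner (𝕜 := C) v v'
      - ∑ p ∈ P, inner (𝕜 := C) (Θ p.1 p.2 v) (Θ p.1 p.2 v') with hCr
    have hD0 : ∀ v, 0 ≤ D v := fun v => sub_nonneg.2 (posP P v)
    have hDadd : ∀ u v : E, D (u + v) = D u + D v + Cr u v + Cr v u := by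
      intro u v
      simp only [hD, hCr, map_add, OldCStarModule.inner_add_left, OldCStarModule.inner_add_right,
        Finset.sum_add_distrib]
      abel
    have hDsub : ∀ u v : E, D (u - v) = D u + D v - Cr u v - Cr v u := by
      intro u v
      simp only [hD, hCr, map_sub, OldCStarModule.inner_sub_left, OldCStarModule.inner_sub_right,
        Finset.sum_sub_distrib]
      abel
    have hzw : z₀ + w = z := by rw [hwdef]; abel
    have hpar : D z + D (z₀ - w) = D z₀ + D z₀ + D w + D w := by
      rw [← hzw, hDadd z₀ w, hDsub z₀ w]
      abel
    have hDle : D z ≤ D z₀ + D z₀ + D w + D w := by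
      have h9 : D z = (D z₀ + D z₀ + D w + D w) - D (z₀ - w) := by
        rw [← hpar]; abel
      rw [h9]
      exact sub_le_self _ (hD0 _)
    have hDw : D w ≤ inner (𝕜 := C) w w :=
      sub_le_self _ (Finset.sum_nonneg fun p _ => OldCStarModule.inner_self_nonneg)
    have hDle2 : D z ≤ D z₀ + D z₀ + inner (𝕜 := C) w w + inner (𝕜 := C) w w :=
      hDle.trans (add_le_add (add_le_add le_rfl hDw) hDw)
    have hnorm : ‖D z‖ ≤ ‖D z₀ + D z₀ + inner (𝕜 := C) w w + inner (𝕜 := C) w w‖ :=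
      CStarAlgebra.norm_le_norm_of_nonneg_of_le (hD0 z) hDle2
    have hnorm2 : ‖D z₀ + D z₀ + inner (𝕜 := C) w w + inner (𝕜 := C) w w‖
        ≤ ‖D z₀‖ + ‖D z₀‖ + ‖inner (𝕜 := C) w w‖ + ‖inner (𝕜 := C) w w‖ := by
      calc ‖D z₀ + D z₀ + inner (𝕜 := C) w w + inner (𝕜 := C) w w‖
          ≤ ‖D z₀ + D z₀ + inner (𝕜 := C) w w‖ + ‖inner (𝕜 := C) w w‖ := norm_add_le _ _
        _ ≤ ‖D z₀ + D z₀‖ + ‖inner (𝕜 := C) w w‖ + ‖inner (𝕜 := C) w w‖ := by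
            have := norm_add_le (D z₀ + D z₀) (inner (𝕜 := C) w w)
            linarith
        _ ≤ ‖D z₀‖ + ‖D z₀‖ + ‖inner (𝕜 := C) w w‖ + ‖inner (𝕜 := C) w w‖ := by
            have := norm_add_le (D z₀) (D z₀)
            linarith
    have hww : ‖inner (𝕜 := C) w w‖ < ε / 8 := by
      have h1 : ‖w‖ < δ := by
        rw [hwdef, ← dist_eq_norm]
        exact hz₀close
      have h2 : ‖inner (𝕜 := C) w w‖ = ‖w‖ ^ 2 := (OldCStarModule.norm_sq_eq).symm
      rw [h2]
      have : ‖w‖ ^ 2 < δ ^ 2 := by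
        apply pow_lt_pow_left₀ h1 (norm_nonneg _)
        norm_num
      rwa [hδdef, Real.sq_sqrt (by positivity : (0:ℝ) ≤ ε / 8)] at this
    have hDz₀ : ‖D z₀‖ < ε / 8 := by
      have := hP₀ P hPge
      rw [dist_eq_norm, norm_sub_rev] at this
      exact this
    rw [dist_eq_norm, norm_sub_rev]
    have : ‖D z‖ < ε := by
      have := hnorm.trans hnorm2
      linarith
    exact this
  intro z
  exact (hmain z).tsum_eq
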